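/- The composition SHUFFLE ∘ (conditional add/subtract of ℓ) realizes P_ℓ: for basis states |ℓ⟩|j⟩, applying |j⟩ ↦ |j−ℓ mod N⟩ when j, ℓ have equal parity (or |j⟩ ↦ |j+ℓ mod N⟩ when the parities differ) followed by SHUFFLE on the second register yields |ℓ⟩ P_ℓ|j⟩. -/

import Mathlib

open Matrix

/-- `P_ℓ = Σ_{j=0}^{N/2−1}(|j⟩⟨2j+ℓ mod N| + |N/2+j⟩⟨2j+1−ℓ mod N|)` on `N = 2^n`. -/
def Pmat (n ℓ : ℕ) : Matrix (Fin (2^n)) (Fin (2^n)) ℂ :=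
  fun r c =>
    if (r : ℕ) < 2^n / 2 then
      (if (c : ℕ) = (2 * (r : ℕ) + ℓ) % 2^n then 1 else 0)
    else
      (if (c : ℕ) = (2 * ((r : ℕ) - 2^n / 2) + 1 + (2^n - ℓ)) % 2^n then 1 else 0)

/-- The conditional add/subtract: `|j⟩ ↦ |j−ℓ mod N⟩` when `j` and `ℓ` have equal
parity, and `|j⟩ ↦ |j+ℓ mod N⟩` when their parities differ. -/
def condAddSub (n ℓ : ℕ) : Matrix (Fin (2^n)) (Fin (2^n)) ℂ :=
  fun i j =>
    if (j : ℕ) % 2 = ℓ % 2 then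
      (if (i : ℕ) = ((j : ℕ) + (2^n - ℓ)) % 2^n then 1 else 0)
    else
      (if (i : ℕ) = ((j : ℕ) + ℓ) % 2^n then 1 else 0)

/-- The perfect shuffle: `|q⟩ ↦ |q/2⟩` for even `q` and `|q⟩ ↦ |N/2+(q−1)/2⟩` for
odd `q`. -/
def shuffleMat (n : ℕ) : Matrix (Fin (2^n)) (Fin (2^n)) ℂ :=
  fun i q =>
    if (q : ℕ) % 2 = 0 then (if (i : ℕ) = (q : ℕ) / 2 then 1 else 0)
    else (if (i : ℕ) = 2^n / 2 + ((q : ℕ) - 1) / 2 then 1 else 0)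


lemma aux_mulVec_basis {N : ℕ} (M : Matrix (Fin N) (Fin N) ℂ) (j : Fin N) :
    M *ᵥ (fun k => if k = j then (1:ℂ) else 0) = fun r => M r j := by
  funext r
  simp [Matrix.mulVec, dotProduct]

/-- the composition SHUFFLE ∘ (conditional add/subtract of `ℓ`)
realizes `P_ℓ` on every basis state `|j⟩` (the ancilla register `|ℓ⟩` is a
spectator, so the identity is stated on the system register for each `ℓ`). -/
theorem shuffle_condAddSub_realizes_P (n : ℕ) (hn : 1 ≤ n) (ℓ : ℕ) (hℓ : ℓ < 2^n)
    (j : Fin (2^n)) :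
    (shuffleMat n) *ᵥ ((condAddSub n ℓ) *ᵥ (fun k => if k = j then (1 : ℂ) else 0)) =
      (Pmat n ℓ) *ᵥ (fun k => if k = j then (1 : ℂ) else 0) := by
  
  have hNpos : 0 < 2^n := Nat.pow_pos (by norm_num)
  have h2N : 2 ∣ 2^n := dvd_pow_self 2 (Nat.one_le_iff_ne_zero.mp hn)
  have hNdiv : 2^n / 2 * 2 = 2^n := Nat.div_mul_cancel h2N
  rw [aux_mulVec_basis, aux_mulVec_basis]
  by_cases hpar : (j:ℕ) % 2 = ℓ % 2
  · -- equal parity: subtract ℓ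
    set i0 : ℕ := ((j:ℕ) + (2^n - ℓ)) % 2^n with hi0
    have hi0lt : i0 < 2^n := Nat.mod_lt _ hNpos
    have hcol : (fun k => condAddSub n ℓ k j) =
        fun k => if k = (⟨i0, hi0lt⟩ : Fin (2^n)) then (1:ℂ) else 0 := by
      funext k
      simp only [condAddSub, hpar, if_true, Fin.ext_iff]
      rfl
    rw [hcol, aux_mulVec_basis]
    funext r
    have hi0even : i0 % 2 = 0 := by
      have h1 : ((j:ℕ) + (2^n - ℓ)) % 2 = 0 := by omega
      rw [hi0, Nat.mod_mod_of_dvd _ h2N, h1]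
    simp only [shuffleMat, Pmat, hi0even, if_true]
    by_cases hr : (r:ℕ) < 2^n / 2
    · simp only [hr, if_true]
      congr 1
      rw [eq_iff_iff]
      constructor
      · intro h
        have h2r : 2 * (r:ℕ) = i0 := by omega
        have e1 : (2 * (r:ℕ) + ℓ) % 2^n = ((j:ℕ) + (2^n - ℓ) + ℓ) % 2^n := by
          rw [h2r, hi0, Nat.mod_add_mod]
        rw [e1]
        have e2 : (j:ℕ) + (2^n - ℓ) + ℓ = (j:ℕ) + 2^n := by omega
        rw [e2, Nat.add_mod_right, Nat.mod_eq_of_lt j.isLt]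
      · intro h
        have e1 : i0 = (2 * (r:ℕ) + ℓ + (2^n - ℓ)) % 2^n := by
          rw [hi0, h, Nat.mod_add_mod]
        have e2 : 2 * (r:ℕ) + ℓ + (2^n - ℓ) = 2 * (r:ℕ) + 2^n := by omega
        rw [e2, Nat.add_mod_right, Nat.mod_eq_of_lt (by omega)] at e1
        omega
    · simp only [hr, if_false]
      have h1 : (r:ℕ) ≠ i0 / 2 := by omega
      have h2 : (j:ℕ) ≠ (2 * ((r:ℕ) - 2^n / 2) + 1 + (2^n - ℓ)) % 2^n := by
        intro h
        have := Nat.mod_mod_of_dvd (2 * ((r:ℕ) - 2^n / 2) + 1 + (2^n - ℓ)) h2N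
        omega
      simp [h1, h2]
  · -- opposite parity: add ℓ
    set i0 : ℕ := ((j:ℕ) + ℓ) % 2^n with hi0
    have hi0lt : i0 < 2^n := Nat.mod_lt _ hNpos
    have hcol : (fun k => condAddSub n ℓ k j) =
        fun k => if k = (⟨i0, hi0lt⟩ : Fin (2^n)) then (1:ℂ) else 0 := by
      funext k
      simp only [condAddSub, hpar, if_false, Fin.ext_iff]
      rfl
    rw [hcol, aux_mulVec_basis]
    funext r
    have hi0odd : i0 % 2 = 1 := by
      have h1 : ((j:ℕ) + ℓ) % 2 = 1 := by omega
      rw [hi0, Nat.mod_mod_of_dvd _ h2N, h1]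
    simp only [shuffleMat, Pmat, hi0odd]
    norm_num
    by_cases hr : (r:ℕ) < 2^n / 2
    · simp only [hr, if_true]
      have h1 : (r:ℕ) ≠ 2^n / 2 + (i0 - 1) / 2 := by omega
      have h2 : (j:ℕ) ≠ (2 * (r:ℕ) + ℓ) % 2^n := by
        intro h
        have := Nat.mod_mod_of_dvd (2 * (r:ℕ) + ℓ) h2N
        omega
      simp [h1, h2]
    · simp only [hr, if_false]
      congr 1
      rw [eq_iff_iff]
      constructor
      · intro h
        have h2r : 2 * ((r:ℕ) - 2^n / 2) + 1 = i0 := by omega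
        have e1 : (2 * ((r:ℕ) - 2^n / 2) + 1 + (2^n - ℓ)) % 2^n = ((j:ℕ) + ℓ + (2^n - ℓ)) % 2^n := by
          rw [h2r, hi0, Nat.mod_add_mod]
        rw [e1]
        have e2 : (j:ℕ) + ℓ + (2^n - ℓ) = (j:ℕ) + 2^n := by omega
        rw [e2, Nat.add_mod_right, Nat.mod_eq_of_lt j.isLt]
      · intro h
        have e1 : i0 = (2 * ((r:ℕ) - 2^n / 2) + 1 + (2^n - ℓ) + ℓ) % 2^n := by
          rw [hi0, h, Nat.mod_add_mod]
        have e2 : 2 * ((r:ℕ) - 2^n / 2) + 1 + (2^n - ℓ) + ℓ = 2 * ((r:ℕ) - 2^n / 2) + 1 + 2^n := by omega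
        rw [e2, Nat.add_mod_right, Nat.mod_eq_of_lt (by omega)] at e1
        omega
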